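/- arXiv:1008.1128 — 2 statements merged into one kernel-verified Lean document; each statement's English description precedes it below -/
import Mathlib

section
/- Let A and B be 2×2 complex matrices and let u, v ∈ ℂ² be linearly independent. Suppose ‖A·u‖ = ‖B·u‖, ‖A·v‖ = ‖B·v‖, and |⟨A·u, A·v⟩| = |⟨B·u, B·v⟩|. Then rank A = rank B. -/
open scoped InnerProductSpace
open Submodule

lemma rank_toEuclideanLin (A : Matrix (Fin 2) (Fin 2) ℂ) :
    A.rank = Module.finrank ℂ (LinearMap.range (Matrix.toEuclideanLin A)) := by
  rw [Matrix.rank_eq_finrank_range_toLin A (EuclideanSpace.basisFun (Fin 2) ℂ).toBasis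
    (EuclideanSpace.basisFun (Fin 2) ℂ).toBasis]
  congr 2

lemma pair_indep_of_inner_lt {x y : EuclideanSpace ℂ (Fin 2)}
    (h : ‖⟪x, y⟫_ℂ‖ ≠ ‖x‖ * ‖y‖) : LinearIndependent ℂ ![x, y] := by
  have hx : x ≠ 0 := by rintro rfl; simp at h
  rw [LinearIndependent.pair_iff]
  intro s t hst
  by_cases ht : t = 0
  · subst ht
    simp only [zero_smul, add_zero] at hst
    rcases smul_eq_zero.mp hst with hs | hx'
    · exact ⟨hs, rfl⟩
    · exact absurd hx' hx
  · exfalso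
    have hy : y = (-s/t) • x := by
      have h2 : t • y = -(s • x) := by linear_combination (norm := module) hst
      have := congrArg (fun z => t⁻¹ • z) h2
      simp only [smul_smul, inv_mul_cancel₀ ht, one_smul] at this
      rw [this]; match_scalars; field_simp
    apply h
    rw [hy, inner_smul_right, norm_mul, norm_smul]
    rw [@inner_self_eq_norm_sq_to_K ℂ]
    simp [pow_two]; ring

lemma finrank_span_pair (x y : EuclideanSpace ℂ (Fin 2)) :
    Module.finrank ℂ (span ℂ ({x, y} : Set (EuclideanSpace ℂ (Fin 2)))) =
      if ‖x‖ = 0 ∧ ‖y‖ = 0 then 0 else if ‖⟪x, y⟫_ℂ‖ = ‖x‖ * ‖y‖ then 1 else 2 := by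
  by_cases hxy : x = 0 ∧ y = 0
  · rw [if_pos (by simp [hxy.1, hxy.2])]
    obtain ⟨rfl, rfl⟩ := hxy
    simp
  · rw [if_neg (by simpa [norm_eq_zero] using hxy)]
    by_cases hin : ‖⟪x, y⟫_ℂ‖ = ‖x‖ * ‖y‖
    · rw [if_pos hin]
      by_cases hx : x = 0
      · have hy : y ≠ 0 := fun h => hxy ⟨hx, h⟩
        subst hx
        rw [show ({0, y} : Set (EuclideanSpace ℂ (Fin 2))) = insert 0 {y} from rfl,
          Submodule.span_insert_zero]
        exact finrank_span_singleton hy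
      · by_cases hy : y = 0
        · subst hy
          rw [Set.pair_comm, Submodule.span_insert_zero]
          exact finrank_span_singleton hx
        · obtain ⟨r, hr, rfl⟩ := (norm_inner_eq_norm_iff hx hy).mp hin
          rw [Set.pair_comm, Submodule.span_insert_eq_span
            (Submodule.mem_span_singleton.mpr ⟨r, rfl⟩)]
          exact finrank_span_singleton hx
    · rw [if_neg hin]
      have hli := pair_indep_of_inner_lt hin
      have : ({x, y} : Set (EuclideanSpace ℂ (Fin 2))) = Set.range ![x, y] := by
        simp [Matrix.range_cons, Matrix.range_empty]
        exact Set.pair_comm x y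
      rw [this, finrank_span_eq_card hli]
      simp

lemma gram_finrank {x y x' y' : EuclideanSpace ℂ (Fin 2)}
    (e1 : ‖x‖ = ‖x'‖) (e2 : ‖y‖ = ‖y'‖) (e3 : ‖⟪x, y⟫_ℂ‖ = ‖⟪x', y'⟫_ℂ‖) :
    Module.finrank ℂ (span ℂ ({x, y} : Set (EuclideanSpace ℂ (Fin 2)))) =
      Module.finrank ℂ (span ℂ ({x', y'} : Set (EuclideanSpace ℂ (Fin 2)))) := by
  rw [finrank_span_pair, finrank_span_pair, e1, e2, e3]

theorem stmt_3 (A B : Matrix (Fin 2) (Fin 2) ℂ) (u v : EuclideanSpace ℂ (Fin 2))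
    (hind : LinearIndependent ℂ ![u, v])
    (h1 : ‖Matrix.toEuclideanLin A u‖ = ‖Matrix.toEuclideanLin B u‖)
    (h2 : ‖Matrix.toEuclideanLin A v‖ = ‖Matrix.toEuclideanLin B v‖)
    (h3 : ‖⟪Matrix.toEuclideanLin A u, Matrix.toEuclideanLin A v⟫_ℂ‖
        = ‖⟪Matrix.toEuclideanLin B u, Matrix.toEuclideanLin B v⟫_ℂ‖) :
    A.rank = B.rank := by
  have hcard : Fintype.card (Fin 2) = Module.finrank ℂ (EuclideanSpace ℂ (Fin 2)) := by simp
  have hspan : span ℂ ({u, v} : Set (EuclideanSpace ℂ (Fin 2))) = ⊤ := by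
    have hb := (basisOfLinearIndependentOfCardEqFinrank hind hcard).span_eq
    rwa [coe_basisOfLinearIndependentOfCardEqFinrank, show Set.range ![u, v] = {u, v} by
      simp [Matrix.range_cons, Matrix.range_empty]; exact Set.pair_comm v u] at hb
  have hr : ∀ M : Matrix (Fin 2) (Fin 2) ℂ, LinearMap.range (Matrix.toEuclideanLin M) =
      span ℂ ({Matrix.toEuclideanLin M u, Matrix.toEuclideanLin M v} :
        Set (EuclideanSpace ℂ (Fin 2))) := by
    intro M
    rw [← Submodule.map_top, ← hspan, Submodule.map_span, Set.image_pair]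
  rw [rank_toEuclideanLin, rank_toEuclideanLin, hr, hr]
  exact gram_finrank h1 h2 h3
end

section
/- Let θ be a real number with e^{iθ} ≠ 1, let c be a nonzero complex number, and let X be an invertible 2×2 complex matrix. For i, j ∈ {0,1} set ε_{ij} = e^{iθ} if i = j = 1 and ε_{ij} = 1 otherwise. Suppose vectors a_{ki}, b_{lj} ∈ ℂ² for k, i, l, j ∈ {0,1} satisfy: ⟨a_{ki}, X·b_{lj}⟩ = c·ε_{ij} whenever k = i and l = j, and ⟨a_{ki}, X·b_{lj}⟩ = 0 otherwise. Then a₀₀ and a₁₁ are linearly independent, b₀₀ and b₁₁ are linearly independent, and a₀₁ = a₁₀ = 0 and b₀₁ = b₁₀ = 0. -/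
open scoped InnerProductSpace

lemma orth_pair (u v w : EuclideanSpace ℂ (Fin 2))
    (hind : LinearIndependent ℂ ![u, v])
    (h1 : ⟪w, u⟫_ℂ = 0) (h2 : ⟪w, v⟫_ℂ = 0) : w = 0 := by
  have hspan : Submodule.span ℂ (Set.range ![u, v]) = ⊤ := by
    apply LinearIndependent.span_eq_top_of_card_eq_finrank hind
    simp [finrank_euclideanSpace]
  have hrange : Set.range ![u, v] = ({u, v} : Set _) := by
    ext x
    simp [Fin.exists_fin_two]; tauto
  have hw : w ∈ Submodule.span ℂ ({u, v} : Set (EuclideanSpace ℂ (Fin 2))) := by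
    rw [← hrange, hspan]; trivial
  obtain ⟨s, t, hst⟩ := Submodule.mem_span_pair.mp hw
  have : ⟪w, w⟫_ℂ = 0 := by
    nth_rewrite 2 [← hst]
    rw [inner_add_right, inner_smul_right, inner_smul_right, h1, h2]
    ring
  exact inner_self_eq_zero.mp this

theorem stmt_4 (θ : ℝ) (hθ : Complex.exp (θ * Complex.I) ≠ 1)
    (c : ℂ) (hc : c ≠ 0) (X : Matrix (Fin 2) (Fin 2) ℂ) (hX : IsUnit X)
    (a b : Fin 2 → Fin 2 → EuclideanSpace ℂ (Fin 2))
    (ε : Fin 2 → Fin 2 → ℂ)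
    (hε : ∀ i j, ε i j = if i = 1 ∧ j = 1 then Complex.exp (θ * Complex.I) else 1)
    (h : ∀ k i l j, ⟪a k i, Matrix.toEuclideanLin X (b l j)⟫_ℂ =
        if k = i ∧ l = j then c * ε i j else 0) :
    LinearIndependent ℂ ![a 0 0, a 1 1] ∧ LinearIndependent ℂ ![b 0 0, b 1 1] ∧
      a 0 1 = 0 ∧ a 1 0 = 0 ∧ b 0 1 = 0 ∧ b 1 0 = 0 := by
  have hexp : Complex.exp (θ * Complex.I) ≠ 0 := Complex.exp_ne_zero _
  have hce : c * Complex.exp (θ * Complex.I) ≠ 0 := mul_ne_zero hc hexp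
  have h0000 : ⟪a 0 0, Matrix.toEuclideanLin X (b 0 0)⟫_ℂ = c := by
    have := h 0 0 0 0; rw [hε] at this; simpa using this
  have h0011 : ⟪a 0 0, Matrix.toEuclideanLin X (b 1 1)⟫_ℂ = c := by
    have := h 0 0 1 1; rw [hε] at this; simpa using this
  have h1100 : ⟪a 1 1, Matrix.toEuclideanLin X (b 0 0)⟫_ℂ = c := by
    have := h 1 1 0 0; rw [hε] at this; simpa using this
  have h1111 : ⟪a 1 1, Matrix.toEuclideanLin X (b 1 1)⟫_ℂ
      = c * Complex.exp (θ * Complex.I) := by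
    have := h 1 1 1 1; rw [hε] at this; simpa using this
  set E := Complex.exp (θ * Complex.I) with hE
  have hE1 : E - 1 ≠ 0 := sub_ne_zero.mpr hθ
  have hcE1 : c * (E - 1) ≠ 0 := mul_ne_zero hc hE1
  -- independence of a 0 0, a 1 1
  have ha_ind : LinearIndependent ℂ ![a 0 0, a 1 1] := by
    rw [LinearIndependent.pair_iff]
    intro s t hst
    have e1 : ⟪s • a 0 0 + t • a 1 1, Matrix.toEuclideanLin X (b 0 0)⟫_ℂ = 0 := by
      rw [hst, inner_zero_left]
    have e2 : ⟪s • a 0 0 + t • a 1 1, Matrix.toEuclideanLin X (b 1 1)⟫_ℂ = 0 := by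
      rw [hst, inner_zero_left]
    rw [inner_add_left, inner_smul_left, inner_smul_left, h0000, h1100] at e1
    rw [inner_add_left, inner_smul_left, inner_smul_left, h0011, h1111] at e2
    have e3 : (starRingEnd ℂ) t * (c * (E - 1)) = 0 := by linear_combination e2 - e1
    have ht : t = 0 := by
      rcases mul_eq_zero.mp e3 with h' | h'
      · exact star_eq_zero.mp h'
      · exact absurd h' hcE1
    subst ht
    have hs : s = 0 := by
      simp only [map_zero, zero_mul, add_zero] at e1
      rcases mul_eq_zero.mp e1 with h' | h'
      · exact star_eq_zero.mp h'
      · exact absurd h' hc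
    exact ⟨hs, rfl⟩
  -- independence of X b 0 0, X b 1 1
  have hXb_ind : LinearIndependent ℂ
      ![Matrix.toEuclideanLin X (b 0 0), Matrix.toEuclideanLin X (b 1 1)] := by
    rw [LinearIndependent.pair_iff]
    intro s t hst
    have e1 : ⟪a 0 0, s • Matrix.toEuclideanLin X (b 0 0)
        + t • Matrix.toEuclideanLin X (b 1 1)⟫_ℂ = 0 := by rw [hst, inner_zero_right]
    have e2 : ⟪a 1 1, s • Matrix.toEuclideanLin X (b 0 0)
        + t • Matrix.toEuclideanLin X (b 1 1)⟫_ℂ = 0 := by rw [hst, inner_zero_right]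
    rw [inner_add_right, inner_smul_right, inner_smul_right, h0000, h0011] at e1
    rw [inner_add_right, inner_smul_right, inner_smul_right, h1100, h1111] at e2
    have e3 : t * (c * (E - 1)) = 0 := by linear_combination e2 - e1
    have ht : t = 0 := by
      rcases mul_eq_zero.mp e3 with h' | h'
      · exact h'
      · exact absurd h' hcE1
    subst ht
    have hs : s = 0 := by
      simp only [zero_mul, add_zero] at e1
      rcases mul_eq_zero.mp e1 with h' | h'
      · exact h'
      · exact absurd h' hc
    exact ⟨hs, rfl⟩
  -- injectivity of X
  have hXinj : Function.Injective (Matrix.toEuclideanLin X) := by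
    have hmv := Matrix.mulVec_injective_iff_isUnit.mpr hX
    intro x y hxy
    rw [Matrix.toEuclideanLin_apply, Matrix.toEuclideanLin_apply] at hxy
    have := hmv ((WithLp.equiv 2 _).symm.injective hxy)
    exact (WithLp.equiv 2 _).injective this
  -- b independence
  have hb_ind : LinearIndependent ℂ ![b 0 0, b 1 1] := by
    rw [LinearIndependent.pair_iff]
    intro s t hst
    have : s • Matrix.toEuclideanLin X (b 0 0) + t • Matrix.toEuclideanLin X (b 1 1) = 0 := by
      rw [← map_smul, ← map_smul, ← map_add, hst, map_zero]
    exact LinearIndependent.pair_iff.mp hXb_ind s t this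
  refine ⟨ha_ind, hb_ind, ?_, ?_, ?_, ?_⟩
  · exact orth_pair _ _ _ hXb_ind (by simpa using h 0 1 0 0) (by simpa using h 0 1 1 1)
  · exact orth_pair _ _ _ hXb_ind (by simpa using h 1 0 0 0) (by simpa using h 1 0 1 1)
  · have : Matrix.toEuclideanLin X (b 0 1) = 0 := by
      apply orth_pair _ _ _ ha_ind
      · exact inner_eq_zero_symm.mp (by simpa using h 0 0 0 1)
      · exact inner_eq_zero_symm.mp (by simpa using h 1 1 0 1)
    have h0 : Matrix.toEuclideanLin X (0 : EuclideanSpace ℂ (Fin 2)) = 0 := map_zero _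
    exact hXinj (this.trans h0.symm)
  · have : Matrix.toEuclideanLin X (b 1 0) = 0 := by
      apply orth_pair _ _ _ ha_ind
      · exact inner_eq_zero_symm.mp (by simpa using h 0 0 1 0)
      · exact inner_eq_zero_symm.mp (by simpa using h 1 1 1 0)
    have h0 : Matrix.toEuclideanLin X (0 : EuclideanSpace ℂ (Fin 2)) = 0 := map_zero _
    exact hXinj (this.trans h0.symm)
end
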